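/- With the same setup of detours of single-failure replacement paths with highest-possible divergence points: if detour D₂ is strictly nested in D₁, i.e., x₁ < x₂ ≤ y₂ < y₁ on π(s,v), then D₁ and D₂ are vertex-disjoint. -/

import Mathlib

def walkWeight {V : Type*} (W : Sym2 V → ℝ) {G : SimpleGraph V} {u v : V}
    (p : G.Walk u v) : ℝ := (p.edges.map W).sum

def vpos {V : Type*} [DecidableEq V] {G : SimpleGraph V} {s v : V}
    (π : G.Walk s v) (u : V) : ℕ := π.support.idxOf u

open SimpleGraph List

section Helpers
set_option linter.unusedSectionVars false
variable {V : Type*} [DecidableEq V] {G : SimpleGraph V}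

lemma walkWeight_append (W : Sym2 V → ℝ) {u v w : V} (p : G.Walk u v) (q : G.Walk v w) :
    walkWeight W (p.append q) = walkWeight W p + walkWeight W q := by
  simp [walkWeight, SimpleGraph.Walk.edges_append]

lemma walkWeight_bypass_le (W : Sym2 V → ℝ) (hW : ∀ e, 0 < W e) {u v : V} (p : G.Walk u v) :
    walkWeight W p.bypass ≤ walkWeight W p := by
  have hnd : p.bypass.edges.Nodup := p.bypass_isPath.isTrail.edges_nodup
  obtain ⟨l, hperm, hsubl⟩ := hnd.subperm p.edges_bypass_subset
  calc walkWeight W p.bypass = (l.map W).sum := ((hperm.map W).sum_eq).symm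
    _ ≤ (p.edges.map W).sum := List.Sublist.sum_le_sum (hsubl.map W) (by
        intro a ha
        obtain ⟨e, _, rfl⟩ := List.mem_map.1 ha
        exact (hW e).le)
    _ = walkWeight W p := rfl

lemma idxOf_le_idxOf_getLast {α : Type*} [DecidableEq α] :
    ∀ (l : List α) (h : l ≠ []) (_ : l.Nodup) (w : α), w ∈ l →
      l.idxOf w ≤ l.idxOf (l.getLast h)
  | [], h, _, _, _ => absurd rfl h
  | [a], _, _, w, hw => by
      simp only [List.mem_singleton] at hw
      simp [hw]
  | a :: b :: l, _, hnd, w, hw => by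
      have hgl : (b :: l).getLast (by simp) ∈ b :: l := List.getLast_mem _
      have hne : a ≠ (b :: l).getLast (by simp) := by
        intro hEq
        rw [← hEq] at hgl
        exact (List.nodup_cons.1 hnd).1 hgl
      rw [List.getLast_cons (by simp : (b : α) :: l ≠ [])]
      rcases List.mem_cons.1 hw with rfl | hw
      · simp
      · rw [List.idxOf_cons_ne _ hne, List.idxOf_cons_ne _ ?_]
        · exact Nat.succ_le_succ
            (idxOf_le_idxOf_getLast (b :: l) (by simp) (List.nodup_cons.1 hnd).2 w hw)
        · rintro rfl
          exact (List.nodup_cons.1 hnd).1 hw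

lemma vpos_le_of_mem_takeUntil {s v u w : V} (π : G.Walk s v) (hnd : π.support.Nodup)
    (hu : u ∈ π.support) (hw : w ∈ (π.takeUntil u hu).support) : vpos π w ≤ vpos π u := by
  have hsp : π.support = (π.takeUntil u hu).support ++ (π.dropUntil u hu).support.tail := by
    conv_lhs => rw [← π.take_spec hu]
    exact Walk.support_append _ _
  have htnd : (π.takeUntil u hu).support.Nodup := by
    rw [hsp] at hnd; exact hnd.of_append_left
  have hu' : u ∈ (π.takeUntil u hu).support := Walk.end_mem_support _
  have hlast : (π.takeUntil u hu).support.getLast (by simp) = u := Walk.getLast_support _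
  show π.support.idxOf w ≤ π.support.idxOf u
  rw [hsp, List.idxOf_append_of_mem hw, List.idxOf_append_of_mem hu']
  have h2 := idxOf_le_idxOf_getLast (π.takeUntil u hu).support (by simp) htnd w hw
  rwa [hlast] at h2

lemma vpos_le_of_mem_dropUntil {s v u w : V} (π : G.Walk s v) (hnd : π.support.Nodup)
    (hu : u ∈ π.support) (hw : w ∈ (π.dropUntil u hu).support) : vpos π u ≤ vpos π w := by
  have hsp : π.support = (π.takeUntil u hu).support ++ (π.dropUntil u hu).support.tail := by
    conv_lhs => rw [← π.take_spec hu]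
    exact Walk.support_append _ _
  have hw2 : w ∈ u :: (π.dropUntil u hu).support.tail := by
    rw [← Walk.support_eq_cons]; exact hw
  rcases List.mem_cons.1 hw2 with rfl | hw'
  · exact le_refl _
  · have hnotin : w ∉ (π.takeUntil u hu).support := by
      rw [hsp, List.nodup_append] at hnd
      exact fun hcon => hnd.2.2 w hcon w hw' rfl
    have hu' : u ∈ (π.takeUntil u hu).support := Walk.end_mem_support _
    show π.support.idxOf u ≤ π.support.idxOf w
    rw [hsp, List.idxOf_append_of_mem hu', List.idxOf_append_of_notMem hnotin]
    have h1 : (π.takeUntil u hu).support.idxOf u < (π.takeUntil u hu).support.length :=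
      List.idxOf_lt_length_iff.2 hu'
    omega

end Helpers

/-- Setup of single-failure replacement-path detours: `π = π(s,v)` is the
unique shortest path; for `i ∈ {0,1}`, the failed edge is `e_i = s(a i, a' i) ∈ π` lying on
`π` between `x i` and `y i`; the replacement path
`P_i = π(s, x_i) ∘ D_i ∘ π(y_i, v)` is a shortest `s–v` path avoiding `e_i`, the detour
`D_i` is internally vertex-disjoint from `π`, and its starting point `x i` is the divergence
point closest to `s` among all optimal replacement paths (hypothesis `hmin`).  Shortest
paths in every edge-deleted subgraph are unique under `W` (hypothesis `huniq`).
**Statement 7.** Conclusion: if `D 1` is strictly nested in `D 0`, i.e.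
`x 0 < x 1 ≤ y 1 < y 0` on `π`, then `D 0` and `D 1` are vertex-disjoint. -/
theorem nested_detours_disjoint {V : Type*} [DecidableEq V]
    (G : SimpleGraph V) (W : Sym2 V → ℝ) (hW : ∀ e, 0 < W e)
    (huniq : ∀ (s' : Set (Sym2 V)) (u w : V) (p q : G.Walk u w), p.IsPath → q.IsPath →
      (∀ f ∈ p.edges, f ∉ s') → (∀ f ∈ q.edges, f ∉ s') →
      (∀ r : G.Walk u w, r.IsPath → (∀ f ∈ r.edges, f ∉ s') →
        walkWeight W p ≤ walkWeight W r) →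
      (∀ r : G.Walk u w, r.IsPath → (∀ f ∈ r.edges, f ∉ s') →
        walkWeight W q ≤ walkWeight W r) →
      p = q)
    (s v : V) (π : G.Walk s v) (hπ : π.IsPath)
    (hπopt : ∀ R : G.Walk s v, R.IsPath → walkWeight W π ≤ walkWeight W R)
    (x y a a' : Fin 2 → V)
    (hx : ∀ i, x i ∈ π.support) (hy : ∀ i, y i ∈ π.support)
    (ha : ∀ i, s(a i, a' i) ∈ π.edges)
    (hconsec : ∀ i, vpos π (a' i) = vpos π (a i) + 1)
    (hbetween : ∀ i, vpos π (x i) ≤ vpos π (a i) ∧ vpos π (a' i) ≤ vpos π (y i))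
    (D : (i : Fin 2) → G.Walk (x i) (y i))
    (hDpath : ∀ i, (D i).IsPath)
    (hintern : ∀ i, ∀ u ∈ (D i).support, u ∈ π.support → u = x i ∨ u = y i)
    (hPpath : ∀ i,
      ((π.takeUntil (x i) (hx i)).append ((D i).append (π.dropUntil (y i) (hy i)))).IsPath)
    (hPavoid : ∀ i, s(a i, a' i) ∉
      ((π.takeUntil (x i) (hx i)).append ((D i).append (π.dropUntil (y i) (hy i)))).edges)
    (hPopt : ∀ i, ∀ R : G.Walk s v, R.IsPath → s(a i, a' i) ∉ R.edges →
      walkWeight W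
        ((π.takeUntil (x i) (hx i)).append ((D i).append (π.dropUntil (y i) (hy i)))) ≤
      walkWeight W R)
    (hmin : ∀ i, ∀ (u : V) (hu : u ∈ π.support) (R : G.Walk u v),
      ((π.takeUntil u hu).append R).IsPath →
      s(a i, a' i) ∉ ((π.takeUntil u hu).append R).edges →
      walkWeight W ((π.takeUntil u hu).append R) ≤
        walkWeight W
          ((π.takeUntil (x i) (hx i)).append ((D i).append (π.dropUntil (y i) (hy i)))) →
      0 < R.length → R.getVert 1 ∉ π.support →
      vpos π (x i) ≤ vpos π u)
    (horder1 : vpos π (x 0) < vpos π (x 1))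
    (horder2 : vpos π (x 1) ≤ vpos π (y 1))
    (horder3 : vpos π (y 1) < vpos π (y 0)) :
    ∀ u ∈ (D 0).support, u ∉ (D 1).support := by
  intro w0 hw0 hw1
  exfalso
  classical
  -- basic facts
  have hnd : π.support.Nodup := hπ.support_nodup
  have hnd0 : (D 0).support.Nodup := (hDpath 0).support_nodup
  have hnd1 : (D 1).support.Nodup := (hDpath 1).support_nodup
  have hax : ∀ i, a i ∈ π.support := fun i => π.fst_mem_support_of_mem_edges (ha i)
  have hax' : ∀ i, a' i ∈ π.support := fun i => π.snd_mem_support_of_mem_edges (ha i)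
  have hq0 : vpos π (a' 0) = vpos π (a 0) + 1 := hconsec 0
  have hq1 : vpos π (a' 1) = vpos π (a 1) + 1 := hconsec 1
  have hc0 : vpos π (a 0) < vpos π (a' 0) := by omega
  have hc1 : vpos π (a 1) < vpos π (a' 1) := by omega
  have hb0L : vpos π (x 0) ≤ vpos π (a 0) := (hbetween 0).1
  have hb0R : vpos π (a' 0) ≤ vpos π (y 0) := (hbetween 0).2
  have hb1L : vpos π (x 1) ≤ vpos π (a 1) := (hbetween 1).1
  have hb1R : vpos π (a' 1) ≤ vpos π (y 1) := (hbetween 1).2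
  have vinj : ∀ {p q : V}, p ∈ π.support → q ∈ π.support → vpos π p = vpos π q → p = q :=
    fun hp hq h => (List.idxOf_inj hp).1 h
  -- maximal common vertex u along D 1
  set Pk : ℕ → Prop := fun k => ∃ z ∈ (D 1).support, z ∈ (D 0).support ∧ vpos (D 1) z = k
    with hPkdef
  have hPw : Pk (vpos (D 1) w0) := ⟨w0, hw1, hw0, rfl⟩
  have hile : vpos (D 1) w0 ≤ (D 1).support.length := List.idxOf_le_length
  obtain ⟨u, hu1, hu0, hkey⟩ := Nat.findGreatest_spec hile hPw
  have humax : ∀ z ∈ (D 1).support, z ∈ (D 0).support → vpos (D 1) z ≤ vpos (D 1) u := by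
    intro z hz1 hz0
    have h1 : vpos (D 1) z ≤ Nat.findGreatest Pk (D 1).support.length :=
      Nat.le_findGreatest List.idxOf_le_length ⟨z, hz1, hz0, rfl⟩
    rw [hkey]; exact h1
  -- u is off π
  have huπ : u ∉ π.support := by
    intro hmem
    rcases hintern 0 u hu0 hmem with h0 | h0 <;> rcases hintern 1 u hu1 hmem with h1 | h1 <;>
      [ (have := congrArg (vpos π) (h0.symm.trans h1));
        (have := congrArg (vpos π) (h0.symm.trans h1));
        (have := congrArg (vpos π) (h0.symm.trans h1));
        (have := congrArg (vpos π) (h0.symm.trans h1))] <;> omega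
  -- edge non-membership in detours
  have hsubP : ∀ i, ∀ e ∈ (D i).edges,
      e ∈ ((π.takeUntil (x i) (hx i)).append ((D i).append (π.dropUntil (y i) (hy i)))).edges := by
    intro i e he
    rw [Walk.edges_append, Walk.edges_append]
    simp [he]
  have hED0 : s(a 1, a' 1) ∉ (D 0).edges := by
    intro he
    have h1 : a 1 ∈ (D 0).support := (D 0).fst_mem_support_of_mem_edges he
    rcases hintern 0 _ h1 (hax 1) with h | h <;> (have := congrArg (vpos π) h; omega)
  have hED1 : s(a 1, a' 1) ∉ (D 1).edges := fun he => hPavoid 1 (hsubP 1 _ he)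
  have hED0' : s(a 0, a' 0) ∉ (D 0).edges := fun he => hPavoid 0 (hsubP 0 _ he)
  have hE0D1 : s(a 0, a' 0) ∉ (D 1).edges := by
    intro he
    have h1 : a 0 ∈ (D 1).support := (D 1).fst_mem_support_of_mem_edges he
    have h2 : a' 0 ∈ (D 1).support := (D 1).snd_mem_support_of_mem_edges he
    rcases hintern 1 _ h1 (hax 0) with h | h
    · rcases hintern 1 _ h2 (hax' 0) with h' | h'
      · have e1 := congrArg (vpos π) h
        have e2 := congrArg (vpos π) h'
        omega
      · have e1 := congrArg (vpos π) h
        have e2 := congrArg (vpos π) h'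
        have e1x : vpos π (a 1) = vpos π (x 1) := by omega
        have e1y : vpos π (a' 1) = vpos π (y 1) := by omega
        have hax1 : a 1 = x 1 := vinj (hax 1) (hx 1) e1x
        have hay1 : a' 1 = y 1 := vinj (hax' 1) (hy 1) e1y
        apply hED1
        have hss : s(a 1, a' 1) = s(a 0, a' 0) := by rw [hax1, hay1, h, h']
        exact hss ▸ he
    · rcases hintern 1 _ h2 (hax' 0) with h' | h' <;>
        (have e1 := congrArg (vpos π) h; have e2 := congrArg (vpos π) h'; omega)
  -- weight splits
  have hD0split : walkWeight W (D 0) =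
      walkWeight W ((D 0).takeUntil u hu0) + walkWeight W ((D 0).dropUntil u hu0) := by
    conv_lhs => rw [← (D 0).take_spec hu0]
    exact walkWeight_append W _ _
  have hD1split : walkWeight W (D 1) =
      walkWeight W ((D 1).takeUntil u hu1) + walkWeight W ((D 1).dropUntil u hu1) := by
    conv_lhs => rw [← (D 1).take_spec hu1]
    exact walkWeight_append W _ _
  -- the two stitched walks
  -- P' : s → v via x0, D0a, u, D1b, y1
  -- Q  : s → v via x1, D1a, u, D0b, y0
  have hIdent :
      walkWeight W ((π.takeUntil (x 0) (hx 0)).append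
          (((D 0).takeUntil u hu0).append (((D 1).dropUntil u hu1).append
            (π.dropUntil (y 1) (hy 1))))) +
        walkWeight W ((π.takeUntil (x 1) (hx 1)).append
          (((D 1).takeUntil u hu1).append (((D 0).dropUntil u hu0).append
            (π.dropUntil (y 0) (hy 0))))) =
      walkWeight W ((π.takeUntil (x 0) (hx 0)).append ((D 0).append (π.dropUntil (y 0) (hy 0)))) +
        walkWeight W ((π.takeUntil (x 1) (hx 1)).append ((D 1).append (π.dropUntil (y 1) (hy 1)))) := by
    simp only [walkWeight_append, hD0split, hD1split]
    ring
  -- e1 not on P'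
  have hP'a1 : s(a 1, a' 1) ∉ ((π.takeUntil (x 0) (hx 0)).append
      (((D 0).takeUntil u hu0).append (((D 1).dropUntil u hu1).append
        (π.dropUntil (y 1) (hy 1))))).edges := by
    simp only [Walk.edges_append, List.mem_append]
    rintro (he | he | he | he)
    · have h1 : a 1 ∈ (π.takeUntil (x 0) (hx 0)).support :=
        Walk.fst_mem_support_of_mem_edges _ he
      have := vpos_le_of_mem_takeUntil π hnd (hx 0) h1
      omega
    · exact hED0 ((D 0).edges_takeUntil_subset hu0 he)
    · exact hED1 ((D 1).edges_dropUntil_subset hu1 he)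
    · have h1 : a 1 ∈ (π.dropUntil (y 1) (hy 1)).support :=
        Walk.fst_mem_support_of_mem_edges _ he
      have := vpos_le_of_mem_dropUntil π hnd (hy 1) h1
      omega
  -- e1 not on Q
  have hQa1 : s(a 1, a' 1) ∉ ((π.takeUntil (x 1) (hx 1)).append
      (((D 1).takeUntil u hu1).append (((D 0).dropUntil u hu0).append
        (π.dropUntil (y 0) (hy 0))))).edges := by
    simp only [Walk.edges_append, List.mem_append]
    rintro (he | he | he | he)
    · have h1 : a' 1 ∈ (π.takeUntil (x 1) (hx 1)).support :=
        Walk.snd_mem_support_of_mem_edges _ he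
      have := vpos_le_of_mem_takeUntil π hnd (hx 1) h1
      omega
    · exact hED1 ((D 1).edges_takeUntil_subset hu1 he)
    · exact hED0 ((D 0).edges_dropUntil_subset hu0 he)
    · have h1 : a 1 ∈ (π.dropUntil (y 0) (hy 0)).support :=
        Walk.fst_mem_support_of_mem_edges _ he
      have := vpos_le_of_mem_dropUntil π hnd (hy 0) h1
      omega
  -- P1 ≤ Q via bypass
  have hQbp : walkWeight W
      ((π.takeUntil (x 1) (hx 1)).append ((D 1).append (π.dropUntil (y 1) (hy 1)))) ≤
      walkWeight W ((π.takeUntil (x 1) (hx 1)).append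
        (((D 1).takeUntil u hu1).append (((D 0).dropUntil u hu0).append
          (π.dropUntil (y 0) (hy 0))))) := by
    have h1 := hPopt 1 _ (Walk.bypass_isPath _)
      (fun hc => hQa1 (Walk.edges_bypass_subset _ hc))
    have h2 := walkWeight_bypass_le W hW ((π.takeUntil (x 1) (hx 1)).append
      (((D 1).takeUntil u hu1).append (((D 0).dropUntil u hu0).append
        (π.dropUntil (y 0) (hy 0)))))
    linarith
  -- case split on the location of e0 relative to x1
  rcases lt_or_ge (vpos π (a 0)) (vpos π (x 1)) with hcase | hcase
  · -- Case A : e0 lies before x1 on π; then P' avoids e0 as well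
    have hP'a0 : s(a 0, a' 0) ∉ ((π.takeUntil (x 0) (hx 0)).append
        (((D 0).takeUntil u hu0).append (((D 1).dropUntil u hu1).append
          (π.dropUntil (y 1) (hy 1))))).edges := by
      simp only [Walk.edges_append, List.mem_append]
      rintro (he | he | he | he)
      · have h1 : a' 0 ∈ (π.takeUntil (x 0) (hx 0)).support :=
          Walk.snd_mem_support_of_mem_edges _ he
        have := vpos_le_of_mem_takeUntil π hnd (hx 0) h1
        omega
      · exact hED0' ((D 0).edges_takeUntil_subset hu0 he)
      · exact hE0D1 ((D 1).edges_dropUntil_subset hu1 he)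
      · have h1 : a 0 ∈ (π.dropUntil (y 1) (hy 1)).support :=
          Walk.fst_mem_support_of_mem_edges _ he
        have := vpos_le_of_mem_dropUntil π hnd (hy 1) h1
        omega
    have h4 := hPopt 0 _ (Walk.bypass_isPath ((π.takeUntil (x 0) (hx 0)).append
        (((D 0).takeUntil u hu0).append (((D 1).dropUntil u hu1).append
          (π.dropUntil (y 1) (hy 1))))))
      (fun hc => hP'a0 (Walk.edges_bypass_subset _ hc))
    have h5 := walkWeight_bypass_le W hW ((π.takeUntil (x 0) (hx 0)).append
        (((D 0).takeUntil u hu0).append (((D 1).dropUntil u hu1).append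
          (π.dropUntil (y 1) (hy 1)))))
    have heqw : walkWeight W ((π.takeUntil (x 0) (hx 0)).append
        (((D 0).takeUntil u hu0).append (((D 1).dropUntil u hu1).append
          (π.dropUntil (y 1) (hy 1))))).bypass =
        walkWeight W ((π.takeUntil (x 0) (hx 0)).append
          ((D 0).append (π.dropUntil (y 0) (hy 0)))) := by linarith
    have hPeq : ((π.takeUntil (x 0) (hx 0)).append
        (((D 0).takeUntil u hu0).append (((D 1).dropUntil u hu1).append
          (π.dropUntil (y 1) (hy 1))))).bypass =
        (π.takeUntil (x 0) (hx 0)).append ((D 0).append (π.dropUntil (y 0) (hy 0))) := by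
      apply huniq {s(a 0, a' 0)} s v _ _ (Walk.bypass_isPath _) (hPpath 0)
      · intro f hf hf'
        rw [Set.mem_singleton_iff] at hf'
        subst hf'
        exact hP'a0 (Walk.edges_bypass_subset _ hf)
      · intro f hf hf'
        rw [Set.mem_singleton_iff] at hf'
        subst hf'
        exact hPavoid 0 hf
      · intro r hr hre
        rw [heqw]
        exact hPopt 0 r hr (fun hc => hre _ hc rfl)
      · intro r hr hre
        exact hPopt 0 r hr (fun hc => hre _ hc rfl)
    -- edge witness: last edge of D 0, into y 0
    have hxney : y 0 ≠ x 0 := by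
      intro h; have := congrArg (vpos π) h; omega
    obtain ⟨z, hadj, q, hq⟩ := Walk.exists_eq_cons_of_ne hxney (D 0).reverse
    have hez : s(y 0, z) ∈ (D 0).edges := by
      have h1 : s(y 0, z) ∈ (D 0).reverse.edges := by rw [hq]; simp
      rwa [Walk.edges_reverse, List.mem_reverse] at h1
    have hzD0 : z ∈ (D 0).support := (D 0).snd_mem_support_of_mem_edges hez
    have hinP0 : s(y 0, z) ∈ ((π.takeUntil (x 0) (hx 0)).append
        ((D 0).append (π.dropUntil (y 0) (hy 0)))).edges := hsubP 0 _ hez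
    rw [← hPeq] at hinP0
    have hinP' := Walk.edges_bypass_subset _ hinP0
    simp only [Walk.edges_append, List.mem_append] at hinP'
    rcases hinP' with he | he | he | he
    · have h1 : y 0 ∈ (π.takeUntil (x 0) (hx 0)).support :=
        Walk.fst_mem_support_of_mem_edges _ he
      have := vpos_le_of_mem_takeUntil π hnd (hx 0) h1
      omega
    · have h1 : y 0 ∈ ((D 0).takeUntil u hu0).support :=
        Walk.fst_mem_support_of_mem_edges _ he
      have h2 := vpos_le_of_mem_takeUntil (D 0) hnd0 hu0 h1
      have h3 := vpos_le_of_mem_dropUntil (D 0) hnd0 hu0 ((D 0).dropUntil u hu0).end_mem_support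
      have h4 : y 0 = u := (List.idxOf_inj (D 0).end_mem_support).1 (le_antisymm h2 h3)
      exact huπ (h4 ▸ (hy 0))
    · have h1 : y 0 ∈ (D 1).support :=
        (D 1).support_dropUntil_subset hu1 (Walk.fst_mem_support_of_mem_edges _ he)
      rcases hintern 1 _ h1 (hy 0) with h | h <;> (have := congrArg (vpos π) h; omega)
    · have h2 : z ∈ (π.dropUntil (y 1) (hy 1)).support :=
        Walk.snd_mem_support_of_mem_edges _ he
      have hzπ : z ∈ π.support := π.support_dropUntil_subset (hy 1) h2
      rcases hintern 0 z hzD0 hzπ with h | h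
      · have h3 := vpos_le_of_mem_dropUntil π hnd (hy 1) h2
        have := congrArg (vpos π) h
        omega
      · exact hadj.ne h.symm
  · -- Case B : x1 is at or before a0 on π; then Q avoids e0
    have hQa0 : s(a 0, a' 0) ∉ ((π.takeUntil (x 1) (hx 1)).append
        (((D 1).takeUntil u hu1).append (((D 0).dropUntil u hu0).append
          (π.dropUntil (y 0) (hy 0))))).edges := by
      simp only [Walk.edges_append, List.mem_append]
      rintro (he | he | he | he)
      · have h1 : a' 0 ∈ (π.takeUntil (x 1) (hx 1)).support :=
          Walk.snd_mem_support_of_mem_edges _ he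
        have := vpos_le_of_mem_takeUntil π hnd (hx 1) h1
        omega
      · exact hE0D1 ((D 1).edges_takeUntil_subset hu1 he)
      · exact hED0' ((D 0).edges_dropUntil_subset hu0 he)
      · have h1 : a 0 ∈ (π.dropUntil (y 0) (hy 0)).support :=
          Walk.fst_mem_support_of_mem_edges _ he
        have := vpos_le_of_mem_dropUntil π hnd (hy 0) h1
        omega
    have h4 := hPopt 0 _ (Walk.bypass_isPath ((π.takeUntil (x 1) (hx 1)).append
        (((D 1).takeUntil u hu1).append (((D 0).dropUntil u hu0).append
          (π.dropUntil (y 0) (hy 0))))))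
      (fun hc => hQa0 (Walk.edges_bypass_subset _ hc))
    have h5 := walkWeight_bypass_le W hW ((π.takeUntil (x 1) (hx 1)).append
        (((D 1).takeUntil u hu1).append (((D 0).dropUntil u hu0).append
          (π.dropUntil (y 0) (hy 0)))))
    have h7 := hPopt 1 _ (Walk.bypass_isPath ((π.takeUntil (x 0) (hx 0)).append
        (((D 0).takeUntil u hu0).append (((D 1).dropUntil u hu1).append
          (π.dropUntil (y 1) (hy 1))))))
      (fun hc => hP'a1 (Walk.edges_bypass_subset _ hc))
    have h8 := walkWeight_bypass_le W hW ((π.takeUntil (x 0) (hx 0)).append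
        (((D 0).takeUntil u hu0).append (((D 1).dropUntil u hu1).append
          (π.dropUntil (y 1) (hy 1)))))
    have heqw : walkWeight W ((π.takeUntil (x 0) (hx 0)).append
        (((D 0).takeUntil u hu0).append (((D 1).dropUntil u hu1).append
          (π.dropUntil (y 1) (hy 1))))).bypass =
        walkWeight W ((π.takeUntil (x 1) (hx 1)).append
          ((D 1).append (π.dropUntil (y 1) (hy 1)))) := by linarith
    have hPeq : ((π.takeUntil (x 0) (hx 0)).append
        (((D 0).takeUntil u hu0).append (((D 1).dropUntil u hu1).append
          (π.dropUntil (y 1) (hy 1))))).bypass =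
        (π.takeUntil (x 1) (hx 1)).append ((D 1).append (π.dropUntil (y 1) (hy 1))) := by
      apply huniq {s(a 1, a' 1)} s v _ _ (Walk.bypass_isPath _) (hPpath 1)
      · intro f hf hf'
        rw [Set.mem_singleton_iff] at hf'
        subst hf'
        exact hP'a1 (Walk.edges_bypass_subset _ hf)
      · intro f hf hf'
        rw [Set.mem_singleton_iff] at hf'
        subst hf'
        exact hPavoid 1 hf
      · intro r hr hre
        rw [heqw]
        exact hPopt 1 r hr (fun hc => hre _ hc rfl)
      · intro r hr hre
        exact hPopt 1 r hr (fun hc => hre _ hc rfl)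
    -- edge witness: first edge of D 1, out of x 1
    have hxney : x 1 ≠ y 1 := by
      intro h; have := congrArg (vpos π) h; omega
    obtain ⟨z, hadj, q, hq⟩ := Walk.exists_eq_cons_of_ne hxney (D 1)
    have hez : s(x 1, z) ∈ (D 1).edges := by rw [hq]; simp
    have hzD1 : z ∈ (D 1).support := (D 1).snd_mem_support_of_mem_edges hez
    have hinP1 : s(x 1, z) ∈ ((π.takeUntil (x 1) (hx 1)).append
        ((D 1).append (π.dropUntil (y 1) (hy 1)))).edges := hsubP 1 _ hez
    rw [← hPeq] at hinP1
    have hinP' := Walk.edges_bypass_subset _ hinP1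
    simp only [Walk.edges_append, List.mem_append] at hinP'
    rcases hinP' with he | he | he | he
    · have h1 : x 1 ∈ (π.takeUntil (x 0) (hx 0)).support :=
        Walk.fst_mem_support_of_mem_edges _ he
      have := vpos_le_of_mem_takeUntil π hnd (hx 0) h1
      omega
    · have h1 : x 1 ∈ (D 0).support :=
        (D 0).support_takeUntil_subset hu0 (Walk.fst_mem_support_of_mem_edges _ he)
      rcases hintern 0 _ h1 (hx 1) with h | h <;> (have := congrArg (vpos π) h; omega)
    · have h1 : x 1 ∈ ((D 1).dropUntil u hu1).support :=
        Walk.fst_mem_support_of_mem_edges _ he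
      have h2 := vpos_le_of_mem_dropUntil (D 1) hnd1 hu1 h1
      have h3 : vpos (D 1) (x 1) = 0 := by
        show (D 1).support.idxOf (x 1) = 0
        rw [Walk.support_eq_cons]
        exact List.idxOf_cons_self
      have h5 : vpos (D 1) u = vpos (D 1) (x 1) := by omega
      have h4 : u = x 1 := (List.idxOf_inj hu1).1 h5
      exact huπ (h4 ▸ (hx 1))
    · have h1 : x 1 ∈ (π.dropUntil (y 1) (hy 1)).support :=
        Walk.fst_mem_support_of_mem_edges _ he
      have := vpos_le_of_mem_dropUntil π hnd (hy 1) h1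
      omega
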